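/- Let n ≥ 2 be even and let α, β ∈ ℝ. Set M = exp(αX + βY). Then the top-right 2×2 block of M is symmetric and traceless; explicitly, M_{1,2n−1} + M_{2,2n} = 0 and M_{1,2n} = M_{2,2n−1} (indices 1-based). -/

import Mathlib

open Matrix

noncomputable section

def I2 : Matrix (Fin 2) (Fin 2) ℝ := !![1, 0; 0, 1]
def Tm : Matrix (Fin 2) (Fin 2) ℝ := !![1, 0; 0, -1]
def Rm : Matrix (Fin 2) (Fin 2) ℝ := !![0, -1; 1, 0]
def Pm : Matrix (Fin 2) (Fin 2) ℝ := !![0, 1; 1, 0]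

/-- `c_k = √(k(n−k))`. -/
def cc (n k : ℕ) : ℝ := Real.sqrt (k * (n - k : ℕ))

/-- The 2n×2n matrix, viewed as an n×n array of 2×2 blocks, whose only nonzero blocks are
`B k` at superdiagonal block positions (k, k+1) for 1-based `k = 1,…,n−1`. -/
def blkSup (n : ℕ) (B : ℕ → Matrix (Fin 2) (Fin 2) ℝ) :
    Matrix (Fin (2*n)) (Fin (2*n)) ℝ :=
  Matrix.of fun r c =>
    if (c:ℕ)/2 = (r:ℕ)/2 + 1 then
      B ((r:ℕ)/2 + 1) ⟨(r:ℕ) % 2, by omega⟩ ⟨(c:ℕ) % 2, by omega⟩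
    else 0

/-- The matrix `X` (n even): superdiagonal blocks `c_k I₂` for `k < n/2`,
`c_{n/2} T` at `k = n/2`, and `−c_k I₂` for `k > n/2`. -/
def Xeven (n : ℕ) : Matrix (Fin (2*n)) (Fin (2*n)) ℝ :=
  blkSup n (fun k =>
    if k < n/2 then cc n k • I2
    else if k = n/2 then cc n (n/2) • Tm
    else -(cc n k) • I2)

/-- The matrix `Y` (n even): superdiagonal blocks `c_k R` for `k ≠ n/2` and
`c_{n/2} P` at `k = n/2`. -/
def Yeven (n : ℕ) : Matrix (Fin (2*n)) (Fin (2*n)) ℝ :=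
  blkSup n (fun k => if k = n/2 then cc n (n/2) • Pm else cc n k • Rm)



/-- reduce a natural number mod 2 into `Fin 2` -/
def f2 (a : ℕ) : Fin 2 := ⟨a % 2, by omega⟩

lemma f2_eq_zero {a : ℕ} (h : a % 2 = 0) : f2 a = 0 := by
  simp [f2, Fin.ext_iff, h]

lemma f2_eq_one {a : ℕ} (h : a % 2 = 1) : f2 a = 1 := by
  simp [f2, Fin.ext_iff, h]

lemma blkSup_apply (n : ℕ) (B : ℕ → Matrix (Fin 2) (Fin 2) ℝ) (r c : Fin (2*n)) :
    blkSup n B r c =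
      if (c:ℕ)/2 = (r:ℕ)/2 + 1 then B ((r:ℕ)/2 + 1) (f2 (r:ℕ)) (f2 (c:ℕ)) else 0 := rfl

/-- `Qp B s m = B (s+1) * B (s+2) * ⋯ * B (s+m)` -/
def Qp (B : ℕ → Matrix (Fin 2) (Fin 2) ℝ) (s : ℕ) : ℕ → Matrix (Fin 2) (Fin 2) ℝ
  | 0 => 1
  | m+1 => Qp B s m * B (s+m+1)

/-- rotation-form (complex-number-like) 2×2 matrices -/
def rotF (M : Matrix (Fin 2) (Fin 2) ℝ) : Prop := M 1 0 = -(M 0 1) ∧ M 1 1 = M 0 0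
/-- symmetric traceless 2×2 matrices -/
def symF (M : Matrix (Fin 2) (Fin 2) ℝ) : Prop := M 1 0 = M 0 1 ∧ M 1 1 = -(M 0 0)

lemma rotF_one : rotF 1 := by
  constructor <;> simp [Matrix.one_apply]

lemma rotF_mul_rotF {A B : Matrix (Fin 2) (Fin 2) ℝ} (hA : rotF A) (hB : rotF B) :
    rotF (A * B) := by
  obtain ⟨a1, a2⟩ := hA; obtain ⟨b1, b2⟩ := hB
  constructor <;>
    simp only [Matrix.mul_apply, Fin.sum_univ_two, a1, a2, b1, b2] <;> ring

lemma rotF_mul_symF {A B : Matrix (Fin 2) (Fin 2) ℝ} (hA : rotF A) (hB : symF B) :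
    symF (A * B) := by
  obtain ⟨a1, a2⟩ := hA; obtain ⟨b1, b2⟩ := hB
  constructor <;>
    simp only [Matrix.mul_apply, Fin.sum_univ_two, a1, a2, b1, b2] <;> ring

lemma symF_mul_rotF {A B : Matrix (Fin 2) (Fin 2) ℝ} (hA : symF A) (hB : rotF B) :
    symF (A * B) := by
  obtain ⟨a1, a2⟩ := hA; obtain ⟨b1, b2⟩ := hB
  constructor <;>
    simp only [Matrix.mul_apply, Fin.sum_univ_two, a1, a2, b1, b2] <;> ring

lemma pow_blkSup (n : ℕ) (B : ℕ → Matrix (Fin 2) (Fin 2) ℝ) :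
    ∀ (m : ℕ) (r c : Fin (2*n)),
    ((blkSup n B) ^ m) r c =
      if (c:ℕ)/2 = (r:ℕ)/2 + m then Qp B ((r:ℕ)/2) m (f2 (r:ℕ)) (f2 (c:ℕ)) else 0
  | 0, r, c => by
    simp only [pow_zero, Matrix.one_apply, Qp, Nat.add_zero]
    by_cases h : r = c
    · subst h
      simp [Matrix.one_apply]
    · rw [if_neg h]
      by_cases h2 : (c:ℕ)/2 = (r:ℕ)/2
      · rw [if_pos h2, if_neg (show ¬ f2 (r:ℕ) = f2 (c:ℕ) from ?_)]
        intro hh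
        apply h
        have hmod : (r:ℕ) % 2 = (c:ℕ) % 2 := congrArg Fin.val hh
        exact Fin.ext (by omega)
      · rw [if_neg h2]
  | m+1, r, c => by
    rw [pow_succ, Matrix.mul_apply]
    by_cases hc : (c:ℕ)/2 = (r:ℕ)/2 + (m+1)
    · have hcl := c.isLt
      have hj0 : 2*((r:ℕ)/2+m) < 2*n := by omega
      have hj1 : 2*((r:ℕ)/2+m)+1 < 2*n := by omega
      rw [if_pos hc]
      have key : ∀ j : Fin (2*n),
          ((blkSup n B) ^ m) r j * blkSup n B j c
          = (if j = (⟨2*((r:ℕ)/2+m), hj0⟩ : Fin (2*n)) then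
              Qp B ((r:ℕ)/2) m (f2 (r:ℕ)) 0 * B ((r:ℕ)/2+m+1) 0 (f2 (c:ℕ)) else 0)
          + (if j = (⟨2*((r:ℕ)/2+m)+1, hj1⟩ : Fin (2*n)) then
              Qp B ((r:ℕ)/2) m (f2 (r:ℕ)) 1 * B ((r:ℕ)/2+m+1) 1 (f2 (c:ℕ)) else 0) := by
        intro j
        rw [pow_blkSup n B m r j, blkSup_apply]
        by_cases hj : (j:ℕ)/2 = (r:ℕ)/2 + m
        · rw [if_pos hj, if_pos (show (c:ℕ)/2 = (j:ℕ)/2 + 1 by omega), hj]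
          rcases Nat.mod_two_eq_zero_or_one (j:ℕ) with h0 | h1
          · have hje : j = (⟨2*((r:ℕ)/2+m), hj0⟩ : Fin (2*n)) := Fin.ext (by
              show (j:ℕ) = 2*((r:ℕ)/2+m); omega)
            rw [if_pos hje, if_neg (by rw [hje]; simp only [ne_eq, Fin.ext_iff, Fin.val_mk]; omega), add_zero, f2_eq_zero h0]
          · have hje : j = (⟨2*((r:ℕ)/2+m)+1, hj1⟩ : Fin (2*n)) := Fin.ext (by
              show (j:ℕ) = 2*((r:ℕ)/2+m)+1; omega)
            rw [if_pos hje, if_neg (by rw [hje]; simp only [ne_eq, Fin.ext_iff, Fin.val_mk]; omega), zero_add, f2_eq_one h1]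
        · rw [if_neg hj, zero_mul, if_neg, if_neg, add_zero]
          · intro he
            apply hj
            have hv : (j:ℕ) = 2*((r:ℕ)/2+m)+1 := congrArg Fin.val he
            omega
          · intro he
            apply hj
            have hv : (j:ℕ) = 2*((r:ℕ)/2+m) := congrArg Fin.val he
            omega
      calc (∑ j, ((blkSup n B) ^ m) r j * blkSup n B j c)
          = ∑ j : Fin (2*n),
            ((if j = (⟨2*((r:ℕ)/2+m), hj0⟩ : Fin (2*n)) then
              Qp B ((r:ℕ)/2) m (f2 (r:ℕ)) 0 * B ((r:ℕ)/2+m+1) 0 (f2 (c:ℕ)) else 0)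
          + (if j = (⟨2*((r:ℕ)/2+m)+1, hj1⟩ : Fin (2*n)) then
              Qp B ((r:ℕ)/2) m (f2 (r:ℕ)) 1 * B ((r:ℕ)/2+m+1) 1 (f2 (c:ℕ)) else 0)) :=
            Finset.sum_congr rfl (fun j _ => key j)
        _ = Qp B ((r:ℕ)/2) m (f2 (r:ℕ)) 0 * B ((r:ℕ)/2+m+1) 0 (f2 (c:ℕ))
            + Qp B ((r:ℕ)/2) m (f2 (r:ℕ)) 1 * B ((r:ℕ)/2+m+1) 1 (f2 (c:ℕ)) := by
            rw [Finset.sum_add_distrib]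
            simp [Finset.sum_ite_eq']
        _ = Qp B ((r:ℕ)/2) (m+1) (f2 (r:ℕ)) (f2 (c:ℕ)) := by
            show _ = (Qp B ((r:ℕ)/2) m * B ((r:ℕ)/2+m+1)) (f2 (r:ℕ)) (f2 (c:ℕ))
            rw [Matrix.mul_apply, Fin.sum_univ_two]
    · rw [if_neg hc]
      apply Finset.sum_eq_zero
      intro j _
      rw [pow_blkSup n B m r j, blkSup_apply]
      by_cases h1 : (j:ℕ)/2 = (r:ℕ)/2 + m
      · rw [if_pos h1, if_neg (show ¬ (c:ℕ)/2 = (j:ℕ)/2 + 1 by omega), mul_zero]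
      · rw [if_neg h1, zero_mul]


lemma blkSup_pow_ge (n : ℕ) (B : ℕ → Matrix (Fin 2) (Fin 2) ℝ) {m : ℕ} (hm : n ≤ m) :
    blkSup n B ^ m = 0 := by
  ext r c
  rw [pow_blkSup, if_neg (by have := c.isLt; omega)]
  simp

lemma exp_blkSup_entry (n : ℕ) (hn : 1 ≤ n) (B : ℕ → Matrix (Fin 2) (Fin 2) ℝ)
    (r c : Fin (2*n)) (hr : (r:ℕ) < 2) (hc : (c:ℕ)/2 = n - 1) :
    NormedSpace.exp (blkSup n B) r c
      = ((Nat.factorial (n-1) : ℝ))⁻¹ * Qp B 0 (n-1) (f2 (r:ℕ)) (f2 (c:ℕ)) := by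
  rw [NormedSpace.exp_eq_tsum ℝ]; beta_reduce
  have hts : (∑' m : ℕ, ((Nat.factorial m : ℝ))⁻¹ • blkSup n B ^ m)
      = ∑ m ∈ Finset.range n, ((Nat.factorial m : ℝ))⁻¹ • blkSup n B ^ m := by
    refine tsum_eq_sum (fun m hm => ?_)
    rw [blkSup_pow_ge n B (by simpa using hm)]
    simp
  rw [hts, Matrix.sum_apply]
  simp only [Matrix.smul_apply, smul_eq_mul]
  rw [Finset.sum_eq_single (n-1)]
  · rw [pow_blkSup, if_pos (by omega)]
    have h0 : (r:ℕ)/2 = 0 := by omega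
    rw [h0]
  · intro m hm hne
    rw [pow_blkSup, if_neg (by simp only [Finset.mem_range] at hm; omega), mul_zero]
  · intro h
    exact absurd (Finset.mem_range.mpr (by omega)) h

lemma smul_blkSup_add (n : ℕ) (a b : ℝ) (B1 B2 : ℕ → Matrix (Fin 2) (Fin 2) ℝ) :
    a • blkSup n B1 + b • blkSup n B2 = blkSup n (fun k => a • B1 k + b • B2 k) := by
  ext r c
  simp only [blkSup, Matrix.of_apply, Matrix.add_apply, Matrix.smul_apply]
  split_ifs with h
  · simp [Matrix.add_apply, Matrix.smul_apply]
  · simp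

lemma Qp_form (nh : ℕ) (hn2 : 2 ≤ nh) (B : ℕ → Matrix (Fin 2) (Fin 2) ℝ)
    (hrot : ∀ k, k ≠ nh/2 → rotF (B k)) (hsym : symF (B (nh/2))) :
    ∀ m, (m < nh/2 → rotF (Qp B 0 m)) ∧ (nh/2 ≤ m → symF (Qp B 0 m))
  | 0 => ⟨fun _ => rotF_one, fun h => absurd h (by omega)⟩
  | m+1 => by
    have ih := Qp_form nh hn2 B hrot hsym m
    constructor
    · intro h
      exact rotF_mul_rotF (ih.1 (by omega)) (hrot _ (by omega))
    · intro h
      rcases eq_or_lt_of_le h with he | hlt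
      · have hmm : (0+m+1) = nh/2 := by omega
        show symF (Qp B 0 m * B (0+m+1))
        rw [hmm]
        exact rotF_mul_symF (ih.1 (by omega)) hsym
      · exact symF_mul_rotF (ih.2 (by omega)) (hrot _ (by omega))


/-- For `n` even, the top-right 2×2 block of `exp(αX + βY)` is traceless and symmetric. -/
theorem top_right_block_traceless_symmetric (n : ℕ) (hn : 2 ≤ n) (hne : Even n)
    (α β : ℝ) (M : Matrix (Fin (2*n)) (Fin (2*n)) ℝ)
    (hM : M = NormedSpace.exp (α • Xeven n + β • Yeven n)) :
    M ⟨0, by omega⟩ ⟨2*n - 2, by omega⟩ + M ⟨1, by omega⟩ ⟨2*n - 1, by omega⟩ = 0 ∧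
    M ⟨0, by omega⟩ ⟨2*n - 1, by omega⟩ = M ⟨1, by omega⟩ ⟨2*n - 2, by omega⟩ := by
  set XB : ℕ → Matrix (Fin 2) (Fin 2) ℝ := fun k =>
    if k < n/2 then cc n k • I2
    else if k = n/2 then cc n (n/2) • Tm
    else -(cc n k) • I2 with hXB
  set YB : ℕ → Matrix (Fin 2) (Fin 2) ℝ := fun k =>
    if k = n/2 then cc n (n/2) • Pm else cc n k • Rm with hYB
  set B : ℕ → Matrix (Fin 2) (Fin 2) ℝ := fun k => α • XB k + β • YB k with hB
  have hlin : α • Xeven n + β • Yeven n = blkSup n B := by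
    rw [hB, show Xeven n = blkSup n XB from rfl, show Yeven n = blkSup n YB from rfl]
    exact smul_blkSup_add n α β XB YB
  rw [hM, hlin]
  have hrot : ∀ k, k ≠ n/2 → rotF (B k) := by
    intro k hk
    by_cases hlt : k < n/2
    · constructor <;>
        simp [hB, hXB, hYB, if_pos hlt, hk, I2, Rm, Matrix.add_apply, Matrix.smul_apply] <;>
        ring
    · constructor <;>
        simp [hB, hXB, hYB, if_neg hlt, hk, I2, Rm, Matrix.add_apply, Matrix.smul_apply] <;>
        ring
  have hmid : symF (B (n/2)) := by
    constructor <;>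
      simp [hB, hXB, hYB, Tm, Pm, Matrix.add_apply, Matrix.smul_apply] <;> ring
  have hsymQ : symF (Qp B 0 (n-1)) := (Qp_form n hn B hrot hmid (n-1)).2 (by omega)
  have e00 := exp_blkSup_entry n (by omega) B ⟨0, by omega⟩ ⟨2*n-2, by omega⟩
    (show (0:ℕ) < 2 by omega) (show (2*n-2)/2 = n - 1 by omega)
  have e11 := exp_blkSup_entry n (by omega) B ⟨1, by omega⟩ ⟨2*n-1, by omega⟩
    (show (1:ℕ) < 2 by omega) (show (2*n-1)/2 = n - 1 by omega)
  have e01 := exp_blkSup_entry n (by omega) B ⟨0, by omega⟩ ⟨2*n-1, by omega⟩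
    (show (0:ℕ) < 2 by omega) (show (2*n-1)/2 = n - 1 by omega)
  have e10 := exp_blkSup_entry n (by omega) B ⟨1, by omega⟩ ⟨2*n-2, by omega⟩
    (show (1:ℕ) < 2 by omega) (show (2*n-2)/2 = n - 1 by omega)
  have f20 : f2 (0:ℕ) = 0 := f2_eq_zero (by omega)
  have f21 : f2 (1:ℕ) = 1 := f2_eq_one (by omega)
  have f2e : f2 (2*n-2) = 0 := f2_eq_zero (by omega)
  have f2o : f2 (2*n-1) = 1 := f2_eq_one (by omega)
  rw [f20, f2e] at e00
  rw [f21, f2o] at e11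
  rw [f20, f2o] at e01
  rw [f21, f2e] at e10
  rw [e00, e11, e01, e10, hsymQ.1, hsymQ.2]
  constructor <;> ring

end
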